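/- Let W : [0,∞) → ℝ^{C×p} be differentiable with W(0) = W₀ and W'(t) = √N·W(t) − W(t)W(t)^⊤W(t) for all t ≥ 0. Let Π denote the orthogonal projection of ℝ^C onto ker(W₀^⊤). Then W(t)W(t)^⊤ → √N·(I_C − Π) as t → ∞. -/

import Mathlib

open Matrix Set Filter Topology

attribute [local instance] Matrix.normedAddCommGroup Matrix.normedSpace

section Aux
variable {m n q : Type*} [Fintype m] [Fintype n] [Fintype q]

lemma matrix_hasDerivWithinAt_iff {f : ℝ → Matrix m n ℝ} {f' : Matrix m n ℝ} {s : Set ℝ} {t : ℝ} :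
    HasDerivWithinAt f f' s t ↔ ∀ i j, HasDerivWithinAt (fun τ => f τ i j) (f' i j) s t := by
  exact hasDerivWithinAt_pi.trans (forall_congr' fun i => hasDerivWithinAt_pi)

lemma HasDerivWithinAt.matrix_mul {f : ℝ → Matrix m n ℝ} {g : ℝ → Matrix n q ℝ}
    {f' : Matrix m n ℝ} {g' : Matrix n q ℝ} {s : Set ℝ} {t : ℝ}
    (hf : HasDerivWithinAt f f' s t) (hg : HasDerivWithinAt g g' s t) :
    HasDerivWithinAt (fun τ => f τ * g τ) (f' * g t + f t * g') s t := by
  rw [matrix_hasDerivWithinAt_iff] at hf hg ⊢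
  intro i j
  have h1 : ∀ τ, (f τ * g τ) i j = ∑ k, f τ i k * g τ k j := fun τ => rfl
  simp only [h1]
  have h2 : (f' * g t + f t * g') i j = ∑ k, (f' i k * g t k j + f t i k * g' k j) := by
    simp [Matrix.mul_apply, Finset.sum_add_distrib]
  rw [h2]
  exact HasDerivWithinAt.fun_sum fun k _ => (hf i k).mul (hg k j)

lemma HasDerivWithinAt.matrix_transpose {f : ℝ → Matrix m n ℝ} {f' : Matrix m n ℝ}
    {s : Set ℝ} {t : ℝ} (hf : HasDerivWithinAt f f' s t) :
    HasDerivWithinAt (fun τ => (f τ)ᵀ) f'ᵀ s t := by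
  rw [matrix_hasDerivWithinAt_iff] at hf ⊢
  exact fun i j => hf j i

lemma norm_matrix_mul_le (A : Matrix m n ℝ) (B : Matrix n q ℝ) :
    ‖A * B‖ ≤ (Fintype.card n : ℝ) * ‖A‖ * ‖B‖ := by
  have h0 : (0:ℝ) ≤ (Fintype.card n : ℝ) * ‖A‖ * ‖B‖ := by positivity
  rw [Matrix.norm_le_iff h0]
  intro i j
  calc ‖(A * B) i j‖ = ‖∑ k, A i k * B k j‖ := rfl
    _ ≤ ∑ k, ‖A i k * B k j‖ := norm_sum_le _ _
    _ ≤ ∑ _k : n, ‖A‖ * ‖B‖ := Finset.sum_le_sum fun k _ => by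
        rw [norm_mul]
        exact mul_le_mul (Matrix.norm_entry_le_entrywise_sup_norm A)
          (Matrix.norm_entry_le_entrywise_sup_norm B) (norm_nonneg _) (norm_nonneg _)
    _ = (Fintype.card n : ℝ) * ‖A‖ * ‖B‖ := by
        rw [Finset.sum_const, nsmul_eq_mul, Finset.card_univ, mul_assoc]

lemma matrix_eq_of_mulVec {A B : Matrix m n ℝ} [DecidableEq n]
    (h : ∀ v, A *ᵥ v = B *ᵥ v) : A = B := by
  ext i j
  have := congrFun (h (Pi.single j 1)) i
  simpa [Matrix.mulVec_single] using this


lemma scalar_tendsto {a d : ℝ} (ha : 0 < a) (hd : 0 < d) :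
    Tendsto (fun t : ℝ => Real.exp (2*a*t) * d * (1 + (Real.exp (2*a*t) - 1)/a * d)⁻¹)
      atTop (𝓝 a) := by
  have hexp0 : Tendsto (fun t : ℝ => Real.exp (-(2*a*t))) atTop (𝓝 0) := by
    have h1 : Tendsto (fun t : ℝ => 2*a*t) atTop atTop :=
      Tendsto.const_mul_atTop (by positivity) tendsto_id
    exact Real.tendsto_exp_neg_atTop_nhds_zero.comp h1
  have hden : Tendsto (fun t : ℝ => a * Real.exp (-(2*a*t)) + (1 - Real.exp (-(2*a*t))) * d)
      atTop (𝓝 d) := by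
    have h := (hexp0.const_mul a).add
      (((tendsto_const_nhds (x := (1:ℝ))).sub hexp0).mul (tendsto_const_nhds (x := d)))
    simpa using h
  have hg : Tendsto (fun t : ℝ => (d * a) /
      (a * Real.exp (-(2*a*t)) + (1 - Real.exp (-(2*a*t))) * d)) atTop (𝓝 a) := by
    have h := (tendsto_const_nhds (x := d * a)).div hden hd.ne'
    have heq : d * a / d = a := by field_simp
    rwa [heq] at h
  refine hg.congr' ?_
  filter_upwards [eventually_ge_atTop (0:ℝ)] with t ht
  have hE : (1:ℝ) ≤ Real.exp (2*a*t) := by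
    rw [← Real.exp_zero]; exact Real.exp_le_exp.2 (mul_nonneg (by positivity) ht)
  have hEpos : 0 < Real.exp (2*a*t) := Real.exp_pos _
  have hqq : 0 < 1 + (Real.exp (2*a*t) - 1)/a * d := by
    have : 0 ≤ (Real.exp (2*a*t) - 1)/a := by
      have : (0:ℝ) ≤ Real.exp (2*a*t) - 1 := by linarith
      positivity
    nlinarith
  rw [Real.exp_neg]
  field_simp

end Aux

theorem gram_limit (C N p : ℕ) (hC : 0 < C) (hN : 0 < N) (hp : 0 < p)
    (W₀ : Matrix (Fin C) (Fin p) ℝ)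
    (W : ℝ → Matrix (Fin C) (Fin p) ℝ)
    (hW0 : W 0 = W₀)
    (hW' : ∀ t ∈ Ici (0 : ℝ), HasDerivWithinAt W
      (Real.sqrt N • W t - W t * (W t)ᵀ * W t) (Ici 0) t)
    (Pi : Matrix (Fin C) (Fin C) ℝ)
    (hPi_symm : Piᵀ = Pi)
    (hPi_idem : Pi * Pi = Pi)
    (hPi_range : ∀ v : Fin C → ℝ, W₀ᵀ *ᵥ (Pi *ᵥ v) = 0)
    (hPi_ker : ∀ v : Fin C → ℝ, W₀ᵀ *ᵥ v = 0 → Pi *ᵥ v = v) :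
    Tendsto (fun t => W t * (W t)ᵀ) atTop
      (𝓝 (Real.sqrt N • ((1 : Matrix (Fin C) (Fin C) ℝ) - Pi))) := by
  set a : ℝ := Real.sqrt N with ha_def
  have ha : 0 < a := Real.sqrt_pos.2 (by exact_mod_cast hN)
  set G : ℝ → Matrix (Fin C) (Fin C) ℝ := fun t => W t * (W t)ᵀ with hG_def
  set G₀ : Matrix (Fin C) (Fin C) ℝ := W₀ * W₀ᵀ with hG0_def
  have hG0 : G 0 = G₀ := by rw [hG_def]; simp [hW0, hG0_def]
  -- derivative of G
  have hG' : ∀ t ∈ Ici (0:ℝ), HasDerivWithinAt G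
      ((2*a) • G t - (2:ℝ) • (G t * G t)) (Ici 0) t := by
    intro t ht
    have h := (hW' t ht).matrix_mul (hW' t ht).matrix_transpose
    convert h using 1
    simp only [hG_def]
    simp only [transpose_sub, transpose_smul, transpose_mul, transpose_transpose,
      Matrix.sub_mul, Matrix.mul_sub, Matrix.smul_mul, Matrix.mul_smul, Matrix.mul_assoc]
    module
  -- auxiliary scalar function and matrices
  set c : ℝ → ℝ := fun t => (Real.exp (2*a*t) - 1) / a with hc_def
  set Q : ℝ → Matrix (Fin C) (Fin C) ℝ := fun t => 1 + c t • G₀ with hQ_def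
  set P : ℝ → Matrix (Fin C) (Fin C) ℝ := fun t => Real.exp (2*a*t) • G₀ with hP_def
  set R : ℝ → Matrix (Fin C) (Fin C) ℝ := fun t => G t * Q t - P t with hR_def
  have hexp : ∀ t : ℝ, HasDerivAt (fun τ => Real.exp (2*a*τ)) (2*a*Real.exp (2*a*t)) t := by
    intro t
    have h1 : HasDerivAt (fun τ : ℝ => 2*a*τ) (2*a) t := by
      simpa using (hasDerivAt_id t).const_mul (2*a)
    simpa [mul_comm] using h1.exp
  have hc' : ∀ t : ℝ, HasDerivAt c (2*Real.exp (2*a*t)) t := by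
    intro t
    have h1 : HasDerivAt (fun τ => Real.exp (2*a*τ) - 1) (2*a*Real.exp (2*a*t)) t :=
      (hexp t).sub_const 1
    have h2 := h1.div_const a
    have : 2*a*Real.exp (2*a*t) / a = 2*Real.exp (2*a*t) := by
      field_simp
    rwa [this] at h2
  have hQ' : ∀ t : ℝ, HasDerivAt Q ((2*Real.exp (2*a*t)) • G₀) t := by
    intro t
    exact ((hc' t).smul_const G₀).const_add (1 : Matrix (Fin C) (Fin C) ℝ)
  have hP' : ∀ t : ℝ, HasDerivAt P ((2*a*Real.exp (2*a*t)) • G₀) t := by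
    intro t
    exact (hexp t).smul_const G₀
  have hR' : ∀ t ∈ Ici (0:ℝ), HasDerivWithinAt R
      ((2*a) • R t - (2:ℝ) • (G t * R t)) (Ici 0) t := by
    intro t ht
    have h := ((hG' t ht).matrix_mul (hQ' t).hasDerivWithinAt).sub (hP' t).hasDerivWithinAt
    convert h using 1
    · rfl
    · rfl
    · rfl
    · rfl
    show (2*a) • (G t * Q t - P t) - (2:ℝ) • (G t * (G t * Q t - P t))
      = ((2*a) • G t - (2:ℝ) • (G t * G t)) * Q t + G t * ((2*Real.exp (2*a*t)) • G₀)
        - (2*a*Real.exp (2*a*t)) • G₀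
    simp only [hR_def, hQ_def, hP_def, hG_def]
    simp only [Matrix.sub_mul, Matrix.mul_sub, Matrix.smul_mul, Matrix.mul_smul,
      Matrix.mul_one, Matrix.mul_add, smul_smul, Matrix.mul_assoc, smul_sub, Matrix.add_mul]
    module
  -- R vanishes on [0, ∞)
  have hRcont : ContinuousOn R (Ici 0) := fun t ht => (hR' t ht).continuousWithinAt
  have hGcont : ContinuousOn G (Ici 0) := fun t ht => (hG' t ht).continuousWithinAt
  have hR0 : R 0 = 0 := by
    have hc0 : c 0 = 0 := by simp [hc_def]
    simp [hR_def, hQ_def, hP_def, hc0, hG0]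
  have hRzero : ∀ t ∈ Ici (0:ℝ), R t = 0 := by
    intro T hT
    obtain ⟨K, hK⟩ := (isCompact_Icc (a := (0:ℝ)) (b := T)).exists_bound_of_continuousOn
      (hGcont.mono (Icc_subset_Ici_self))
    set K' : ℝ := 2*a + 2*(C:ℝ)*(max K 0) with hK'_def
    have key := norm_le_gronwallBound_of_norm_deriv_right_le (E := Matrix (Fin C) (Fin C) ℝ)
      (f := R) (f' := fun t => (2*a) • R t - (2:ℝ) • (G t * R t)) (δ := 0) (K := K') (ε := 0)
      (a := 0) (b := T)
      (hRcont.mono Icc_subset_Ici_self)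
      (fun x hx => (hR' x hx.1).mono (Ici_subset_Ici.2 hx.1))
      (by simp [hR0])
      (fun x hx => by
        have hGx : ‖G x‖ ≤ max K 0 := le_trans (hK x ⟨hx.1, hx.2.le⟩) (le_max_left _ _)
        have hmul : ‖G x * R x‖ ≤ (C:ℝ) * ‖G x‖ * ‖R x‖ := by
          simpa [Fintype.card_fin] using norm_matrix_mul_le (G x) (R x)
        have e1 : ‖(2*a) • R x‖ = (2*a) * ‖R x‖ := by
          rw [norm_smul, Real.norm_eq_abs, abs_of_pos (by positivity)]
        have e2 : ‖(2:ℝ) • (G x * R x)‖ = 2 * ‖G x * R x‖ := by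
          rw [norm_smul, Real.norm_eq_abs, abs_of_pos two_pos]
        have h1 := norm_sub_le ((2*a) • R x) ((2:ℝ) • (G x * R x))
        rw [e1, e2] at h1
        have h4 : (C:ℝ) * ‖G x‖ * ‖R x‖ ≤ (C:ℝ) * max K 0 * ‖R x‖ := by
          gcongr
        rw [hK'_def]
        have hR0' : (0:ℝ) ≤ ‖R x‖ := norm_nonneg _
        nlinarith [hmul])
    have := key T ⟨hT, le_refl T⟩
    rw [sub_zero, gronwallBound_ε0_δ0] at this
    exact norm_le_zero_iff.1 this
  have hGQ : ∀ t ∈ Ici (0:ℝ), G t * Q t = P t := by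
    intro t ht
    have h := hRzero t ht
    rw [hR_def] at h
    exact sub_eq_zero.mp h
  -- nonnegativity of c on [0,∞)
  have hexp_ge : ∀ t ∈ Ici (0:ℝ), (1:ℝ) ≤ Real.exp (2*a*t) := by
    intro t ht
    rw [← Real.exp_zero]
    exact Real.exp_le_exp.2 (mul_nonneg (by positivity) ht)
  have hc_nonneg : ∀ t ∈ Ici (0:ℝ), 0 ≤ c t := by
    intro t ht
    have h1 := hexp_ge t ht
    rw [hc_def]
    have h2 : (0:ℝ) ≤ Real.exp (2*a*t) - 1 := by linarith
    positivity
  -- spectral theorem for G₀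
  have hG₀herm : G₀.IsHermitian := by
    rw [hG0_def, ← Matrix.conjTranspose_eq_transpose_of_trivial]
    exact Matrix.isHermitian_mul_conjTranspose_self W₀
  have hG₀psd : G₀.PosSemidef := by
    rw [hG0_def, ← Matrix.conjTranspose_eq_transpose_of_trivial]
    exact Matrix.posSemidef_self_mul_conjTranspose W₀
  set U : Matrix (Fin C) (Fin C) ℝ :=
    (hG₀herm.eigenvectorUnitary : Matrix (Fin C) (Fin C) ℝ) with hU_def
  set D : Fin C → ℝ := hG₀herm.eigenvalues with hD_def
  have hD0 : ∀ i, 0 ≤ D i := fun i => hG₀psd.eigenvalues_nonneg i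
  have hU1 : U * star U = 1 := mem_unitaryGroup_iff.mp hG₀herm.eigenvectorUnitary.2
  have hU2 : star U * U = 1 := mem_unitaryGroup_iff'.mp hG₀herm.eigenvectorUnitary.2
  have hspec : G₀ = U * Matrix.diagonal D * star U := by
    have h := hG₀herm.spectral_theorem
    rw [RCLike.ofReal_real_eq_id] at h
    simpa using h
  -- multiplication of conjugated diagonal matrices
  have hconj_mul : ∀ v w : Fin C → ℝ,
      (U * Matrix.diagonal v * star U) * (U * Matrix.diagonal w * star U)
        = U * Matrix.diagonal (fun i => v i * w i) * star U := by
    intro v w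
    calc (U * Matrix.diagonal v * star U) * (U * Matrix.diagonal w * star U)
        = U * (Matrix.diagonal v * ((star U * U) * (Matrix.diagonal w * star U))) := by
          simp only [Matrix.mul_assoc]
      _ = U * Matrix.diagonal (fun i => v i * w i) * star U := by
          rw [hU2, Matrix.one_mul, ← Matrix.mul_assoc (Matrix.diagonal v),
            Matrix.diagonal_mul_diagonal, Matrix.mul_assoc]
  -- diagonal form of Q and P
  have hQdiag : ∀ t : ℝ, Q t = U * Matrix.diagonal (fun i => 1 + c t * D i) * star U := by
    intro t
    have hdiag1 : Matrix.diagonal (fun i => 1 + c t * D i)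
        = (1 : Matrix (Fin C) (Fin C) ℝ) + c t • Matrix.diagonal D := by
      ext i j
      rcases eq_or_ne i j with rfl | hij
      · simp [Matrix.diagonal_apply_eq, Matrix.one_apply_eq]
      · simp [Matrix.diagonal_apply_ne _ hij, Matrix.one_apply_ne hij]
    calc Q t = 1 + c t • G₀ := by rw [hQ_def]
      _ = U * star U + c t • (U * Matrix.diagonal D * star U) := by rw [hU1, ← hspec]
      _ = U * ((1 : Matrix (Fin C) (Fin C) ℝ) + c t • Matrix.diagonal D) * star U := by
          simp only [Matrix.mul_add, Matrix.add_mul, Matrix.mul_smul, Matrix.smul_mul,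
            Matrix.mul_one, Matrix.one_mul]
      _ = U * Matrix.diagonal (fun i => 1 + c t * D i) * star U := by rw [hdiag1]
  have hPdiag : ∀ t : ℝ, P t = U * Matrix.diagonal (fun i => Real.exp (2*a*t) * D i) * star U := by
    intro t
    have hdiag2 : Matrix.diagonal (fun i => Real.exp (2*a*t) * D i)
        = Real.exp (2*a*t) • Matrix.diagonal D := by
      rw [← Matrix.diagonal_smul]
      rfl
    calc P t = Real.exp (2*a*t) • G₀ := by rw [hP_def]
      _ = Real.exp (2*a*t) • (U * Matrix.diagonal D * star U) := by rw [← hspec]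
      _ = U * (Real.exp (2*a*t) • Matrix.diagonal D) * star U := by
          simp only [Matrix.mul_smul, Matrix.smul_mul]
      _ = _ := by rw [hdiag2]
  -- positivity of the diagonal entries of Q
  have hQpos : ∀ t ∈ Ici (0:ℝ), ∀ i, 0 < 1 + c t * D i := by
    intro t ht i
    have h1 := hc_nonneg t ht
    have h2 := hD0 i
    nlinarith
  -- inverse of Q and the diagonal form of G
  have hGdiag : ∀ t ∈ Ici (0:ℝ), G t
      = U * Matrix.diagonal (fun i => Real.exp (2*a*t) * D i * (1 + c t * D i)⁻¹) * star U := by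
    intro t ht
    set Qi : Matrix (Fin C) (Fin C) ℝ :=
      U * Matrix.diagonal (fun i => (1 + c t * D i)⁻¹) * star U with hQi_def
    have hQQi : Q t * Qi = 1 := by
      rw [hQdiag t, hQi_def, hconj_mul]
      have : (fun i => (1 + c t * D i) * (1 + c t * D i)⁻¹) = fun _ => (1:ℝ) := by
        funext i
        exact mul_inv_cancel₀ (hQpos t ht i).ne'
      rw [this, Matrix.diagonal_one, Matrix.mul_one, hU1]
    calc G t = G t * (Q t * Qi) := by rw [hQQi, Matrix.mul_one]
      _ = (G t * Q t) * Qi := by rw [← Matrix.mul_assoc]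
      _ = P t * Qi := by rw [hGQ t ht]
      _ = U * Matrix.diagonal (fun i => Real.exp (2*a*t) * D i * (1 + c t * D i)⁻¹) * star U := by
          rw [hPdiag t, hQi_def, hconj_mul]
  -- the limiting diagonal
  set L : Fin C → ℝ := fun i => if D i = 0 then 0 else a with hL_def
  have hlim_scalar : ∀ i, Tendsto (fun t => Real.exp (2*a*t) * D i * (1 + c t * D i)⁻¹)
      atTop (𝓝 (L i)) := by
    intro i
    rcases eq_or_ne (D i) 0 with h | h
    · have : (fun t => Real.exp (2*a*t) * D i * (1 + c t * D i)⁻¹) = fun _ => (0:ℝ) := by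
        funext t; rw [h]; ring
      rw [this, hL_def]
      simp [h]
    · have hDi : 0 < D i := lt_of_le_of_ne (hD0 i) (Ne.symm h)
      have hfinal := scalar_tendsto ha hDi
      have hLi : L i = a := by rw [hL_def]; simp [h]
      rw [hLi, hc_def]
      exact hfinal
  -- limit of G
  have hUdiag_entry : ∀ (v : Fin C → ℝ) i j,
      (U * Matrix.diagonal v * star U) i j = ∑ k, U i k * v k * star U k j := by
    intro v i j
    rw [Matrix.mul_apply]
    refine Finset.sum_congr rfl fun k _ => ?_
    rw [Matrix.mul_diagonal]
  have hlim : Tendsto G atTop (𝓝 (U * Matrix.diagonal L * star U)) := by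
    have h2 : Tendsto (fun t => U * Matrix.diagonal
        (fun i => Real.exp (2*a*t) * D i * (1 + c t * D i)⁻¹) * star U) atTop
        (𝓝 (U * Matrix.diagonal L * star U)) := by
      refine tendsto_pi_nhds.2 fun i => tendsto_pi_nhds.2 fun j => ?_
      have he : ∀ t, (U * Matrix.diagonal
          (fun i => Real.exp (2*a*t) * D i * (1 + c t * D i)⁻¹) * star U) i j
          = ∑ k, U i k * (Real.exp (2*a*t) * D k * (1 + c t * D k)⁻¹) * star U k j := by
        intro t; exact hUdiag_entry _ i j
      simp only [he, hUdiag_entry L i j]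
      exact tendsto_finset_sum _ fun k _ =>
        ((hlim_scalar k).const_mul (U i k)).mul_const (star U k j)
    refine Tendsto.congr' ?_ h2
    filter_upwards [eventually_ge_atTop (0:ℝ)] with t ht
    exact (hGdiag t ht).symm
  -- the projection onto the kernel
  set E : Fin C → ℝ := fun i => if D i = 0 then 1 else 0 with hE_def
  set Pi' : Matrix (Fin C) (Fin C) ℝ := U * Matrix.diagonal E * star U with hPi'_def
  have hstarU : star U = Uᵀ := by
    rw [Matrix.star_eq_conjTranspose, Matrix.conjTranspose_eq_transpose_of_trivial]
  have hPi'_symm : Pi'ᵀ = Pi' := by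
    rw [hPi'_def, hstarU, Matrix.transpose_mul, Matrix.transpose_mul,
      Matrix.diagonal_transpose, Matrix.transpose_transpose, Matrix.mul_assoc]
  have hUL : U * Matrix.diagonal L * star U
      = a • ((1 : Matrix (Fin C) (Fin C) ℝ) - Pi') := by
    have hLE : Matrix.diagonal L = a • ((1 : Matrix (Fin C) (Fin C) ℝ) - Matrix.diagonal E) := by
      ext i j
      rcases eq_or_ne i j with rfl | hij
      · rcases eq_or_ne (D i) 0 with h | h
        · simp [hL_def, hE_def, h, Matrix.one_apply_eq]
        · simp [hL_def, hE_def, h, Matrix.one_apply_eq]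
      · simp [hL_def, hE_def, Matrix.diagonal_apply_ne _ hij, Matrix.one_apply_ne hij]
    rw [hLE, hPi'_def]
    simp only [Matrix.mul_smul, Matrix.smul_mul, Matrix.mul_sub, Matrix.sub_mul,
      Matrix.mul_one, Matrix.one_mul, hU1]
  -- Pi' has the characteristic properties of Pi
  have hG₀mulVec : ∀ v : Fin C → ℝ, G₀ *ᵥ v = W₀ *ᵥ (W₀ᵀ *ᵥ v) := by
    intro v
    rw [hG0_def, ← Matrix.mulVec_mulVec]
  have hrange' : ∀ v : Fin C → ℝ, W₀ᵀ *ᵥ (Pi' *ᵥ v) = 0 := by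
    intro v
    set u : Fin C → ℝ := Pi' *ᵥ v with hu_def
    have hG₀Pi' : G₀ * Pi' = 0 := by
      rw [hspec, hPi'_def, hconj_mul]
      have : (fun i => D i * E i) = fun _ => (0:ℝ) := by
        funext i
        rcases eq_or_ne (D i) 0 with h | h
        · simp [hE_def, h]
        · simp [hE_def, h]
      rw [this]
      simp
    have h1 : G₀ *ᵥ u = 0 := by
      rw [hu_def, Matrix.mulVec_mulVec, hG₀Pi', Matrix.zero_mulVec]
    have h2 : dotProduct (W₀ᵀ *ᵥ u) (W₀ᵀ *ᵥ u) = 0 := by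
      have h3 : dotProduct u (G₀ *ᵥ u) = 0 := by rw [h1, dotProduct_zero]
      rw [hG₀mulVec, Matrix.dotProduct_mulVec, ← Matrix.mulVec_transpose] at h3
      exact h3
    exact dotProduct_self_eq_zero.mp h2
  have hker' : ∀ v : Fin C → ℝ, W₀ᵀ *ᵥ v = 0 → Pi' *ᵥ v = v := by
    intro v hv
    have h1 : G₀ *ᵥ v = 0 := by rw [hG₀mulVec, hv, Matrix.mulVec_zero]
    have h2 : Matrix.diagonal D *ᵥ (star U *ᵥ v) = 0 := by
      have h3 : star U *ᵥ (G₀ *ᵥ v) = 0 := by rw [h1, Matrix.mulVec_zero]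
      rw [hspec] at h3
      have h4 : star U * (U * Matrix.diagonal D * star U)
          = Matrix.diagonal D * star U := by
        rw [← Matrix.mul_assoc, ← Matrix.mul_assoc, hU2, Matrix.one_mul]
      rw [Matrix.mulVec_mulVec, h4, ← Matrix.mulVec_mulVec] at h3
      exact h3
    have h5 : ∀ i, D i * (star U *ᵥ v) i = 0 := by
      intro i
      have := congrFun h2 i
      rwa [Matrix.mulVec_diagonal] at this
    have h6 : Matrix.diagonal E *ᵥ (star U *ᵥ v) = star U *ᵥ v := by
      funext i
      rw [Matrix.mulVec_diagonal]
      rcases eq_or_ne (D i) 0 with h | h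
      · simp [hE_def, h]
      · have : (star U *ᵥ v) i = 0 := by
          have := h5 i
          exact (mul_eq_zero.mp this).resolve_left h
        simp [hE_def, h, this]
    calc Pi' *ᵥ v = U *ᵥ (Matrix.diagonal E *ᵥ (star U *ᵥ v)) := by
          rw [hPi'_def, Matrix.mulVec_mulVec, Matrix.mulVec_mulVec]
      _ = U *ᵥ (star U *ᵥ v) := by rw [h6]
      _ = v := by rw [Matrix.mulVec_mulVec, hU1, Matrix.one_mulVec]
  -- identify Pi with Pi'
  have hPiPi' : Pi * Pi' = Pi' := by
    apply matrix_eq_of_mulVec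
    intro v
    rw [← Matrix.mulVec_mulVec]
    exact hPi_ker _ (hrange' v)
  have hPi'Pi : Pi' * Pi = Pi := by
    apply matrix_eq_of_mulVec
    intro v
    rw [← Matrix.mulVec_mulVec]
    exact hker' _ (hPi_range v)
  have hPi_eq : Pi = Pi' := by
    calc Pi = Pi' * Pi := hPi'Pi.symm
      _ = (Piᵀ * Pi'ᵀ)ᵀ := by
          rw [Matrix.transpose_mul, Matrix.transpose_transpose, Matrix.transpose_transpose]
      _ = (Pi * Pi')ᵀ := by rw [hPi_symm, hPi'_symm]
      _ = Pi'ᵀ := by rw [hPiPi']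
      _ = Pi' := hPi'_symm
  -- conclude
  have hfinal : U * Matrix.diagonal L * star U
      = a • ((1 : Matrix (Fin C) (Fin C) ℝ) - Pi) := by
    rw [hUL, hPi_eq]
  rw [hfinal] at hlim
  exact hlim
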